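/- arXiv:1809.10195 — 4 statements merged into one kernel-verified Lean document; each statement's English description precedes it below -/
import Mathlib

section
/- Let p be an odd prime and G a finite group. If G is tame-decoupled, then G is x₀-constrained. -/
open scoped Pointwise

/-- The `p`-core of `G`: the intersection of all Sylow `p`-subgroups. -/
def pCore (p : ℕ) (G : Type*) [Group G] : Subgroup G :=
  ⨅ P : Sylow p G, (P : Subgroup G)

instance pCore_normal (p : ℕ) (G : Type*) [Group G] : (pCore p G).Normal := by
  constructor
  intro x hx g
  rw [pCore, Subgroup.mem_iInf] at hx ⊢
  intro P
  have h := hx (g⁻¹ • P)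
  rw [Sylow.coe_subgroup_smul, Subgroup.mem_pointwise_smul_iff_inv_smul_mem] at h
  simpa [MulAut.conj] using h

/-- `W = V^p⋅[V,V]`, the Frattini subgroup of the `p`-core `V`, as a subgroup of `G`. -/
def pFrattini (p : ℕ) (G : Type*) [Group G] : Subgroup G :=
  Subgroup.closure ((fun v => v ^ p) '' (pCore p G : Set G)) ⊔ ⁅pCore p G, pCore p G⁆

instance pFrattini_normal (p : ℕ) (G : Type*) [Group G] : (pFrattini p G).Normal := by
  have h1 : (Subgroup.closure ((fun v => v ^ p) '' (pCore p G : Set G))).Normal := by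
    constructor
    intro x hx g
    induction hx using Subgroup.closure_induction'' with
    | one => simpa using Subgroup.one_mem _
    | mem y hy =>
        obtain ⟨v, hv, rfl⟩ := hy
        refine Subgroup.subset_closure ⟨g * v * g⁻¹, (pCore_normal p G).conj_mem v hv g, ?_⟩
        simp [conj_pow]
    | inv_mem y hy =>
        obtain ⟨v, hv, rfl⟩ := hy
        have : g * (v ^ p)⁻¹ * g⁻¹ = ((g * v * g⁻¹) ^ p)⁻¹ := by
          rw [conj_pow]; group
        rw [this]
        exact Subgroup.inv_mem _ (Subgroup.subset_closure
          ⟨g * v * g⁻¹, (pCore_normal p G).conj_mem v hv g, by simp [conj_pow]⟩)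
    | mul y z _ _ hy hz =>
        have : g * (y * z) * g⁻¹ = (g * y * g⁻¹) * (g * z * g⁻¹) := by group
        rw [this]
        exact Subgroup.mul_mem _ hy hz
  have h2 : (⁅pCore p G, pCore p G⁆ : Subgroup G).Normal := Subgroup.commutator_normal _ _
  exact Subgroup.sup_normal _ _

/-- `⟨x, y⟩ = (x^{h^{p-1}} y ⋅ x^{h^{p-2}} y ⋯ x^{h} y)^{a}`. -/
def tameBracket (p : ℕ) (h a : ℤ) {G : Type*} [Group G] (x y : G) : G :=
  (((List.range (p - 1)).map fun i => x ^ (h ^ (p - 1 - i)) * y).prod) ^ a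

/-- Membership in `T_G`: the tame relation holds and the images of `σ, τ` generate `G/V`. -/
def MemTG (p : ℕ) {G : Type*} [Group G] (σ τ : G) : Prop :=
  σ⁻¹ * τ * σ = τ ^ p ∧ Subgroup.closure {σ, τ} ⊔ pCore p G = ⊤

/-- `G` is tame-decoupled if `τ` acts trivially on `V/W` for every `(σ,τ) ∈ T_G`. -/
def IsTameDecoupled (p : ℕ) (G : Type*) [Group G] : Prop :=
  ∀ σ τ : G, MemTG p σ τ → ∀ v ∈ pCore p G, τ⁻¹ * v * τ * v⁻¹ ∈ pFrattini p G

/-- `G` is `x₀`-constrained if `x₀^σ⋅⟨x₀,τ⟩⁻¹ ∈ W` implies `x₀ ∈ W`,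
for all `(σ,τ) ∈ T_G` and `x₀ ∈ V`. -/
def IsXConstrained (p : ℕ) (h a : ℤ) (G : Type*) [Group G] : Prop :=
  ∀ σ τ : G, MemTG p σ τ → ∀ x₀ ∈ pCore p G,
    σ⁻¹ * x₀ * σ * (tameBracket p h a x₀ τ)⁻¹ ∈ pFrattini p G → x₀ ∈ pFrattini p G


private lemma list_prod_pow_commute {Q : Type*} [Group Q] (x y : Q) (hc : Commute x y)
    (f : ℕ → ℤ) : ∀ n : ℕ,
    (((List.range n).map fun i => x ^ (f i) * y).prod)
      = x ^ (∑ i ∈ Finset.range n, f i) * y ^ n := by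
  intro n
  induction n with
  | zero => simp
  | succ n ih =>
      rw [List.range_succ, List.map_append, List.prod_append, ih]
      have hyx : y ^ n * x ^ (f n) = x ^ (f n) * y ^ n :=
        (((hc.symm).pow_left n).zpow_right (f n)).eq
      rw [Finset.sum_range_succ, zpow_add, pow_succ]
      simp only [List.map_singleton, List.prod_singleton]
      calc x ^ (∑ i ∈ Finset.range n, f i) * y ^ n * (x ^ (f n) * y)
          = x ^ (∑ i ∈ Finset.range n, f i) * (y ^ n * x ^ (f n)) * y := by group
        _ = x ^ (∑ i ∈ Finset.range n, f i) * (x ^ (f n) * y ^ n) * y := by rw [hyx]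
        _ = x ^ (∑ i ∈ Finset.range n, f i) * x ^ (f n) * (y ^ n * y) := by group

/-- If `G` is tame-decoupled then `G` is `x₀`-constrained. -/
theorem xConstrained_of_tameDecoupled (p : ℕ) [Fact p.Prime] (hodd : Odd p)
    (G : Type*) [Group G] [Finite G] (u r : ℕ)
    (hcard : Nat.card G = u * p ^ r) (hu : ¬ p ∣ u)
    (h a : ℤ)
    (ha0 : a ≡ 0 [ZMOD (u : ℤ)])
    (ha1 : ((p : ℤ) - 1) * a ≡ 1 [ZMOD ((p : ℤ) ^ r)])
    (hh : h ^ (p - 1) ≡ 1 [ZMOD ((p : ℤ) ^ r)])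
    (hord : orderOf (h : ZMod p) = p - 1)
    (htd : IsTameDecoupled p G) :
    IsXConstrained p h a G := by
  intro σ τ hστ x₀ hx₀ hyp
  have hp : p.Prime := Fact.out
  have hp3 : 3 ≤ p := by
    rcases hp.two_le.lt_or_eq with h2 | h2
    · omega
    · exfalso; rw [← h2] at hodd; exact absurd hodd (by decide)
  set W := pFrattini p G with hWdef
  let π : G →* G ⧸ W := QuotientGroup.mk' W
  have hker : ∀ g : G, π g = 1 ↔ g ∈ W := fun g => QuotientGroup.eq_one_iff g
  -- τ commutes with x₀ modulo W
  have h1 : π (τ⁻¹ * x₀ * τ * x₀⁻¹) = 1 := (hker _).mpr (htd σ τ hστ x₀ hx₀)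
  have hcomm : Commute (π x₀) (π τ) := by
    simp only [map_mul, map_inv, mul_inv_eq_one] at h1
    calc π x₀ * π τ = π τ * ((π τ)⁻¹ * π x₀ * π τ) := by group
      _ = π τ * π x₀ := by rw [h1]
  -- x₀ ^ p ∈ W
  have hxpW : x₀ ^ p ∈ W :=
    Subgroup.mem_sup_left (Subgroup.subset_closure ⟨x₀, hx₀, rfl⟩)
  have hxp : π x₀ ^ p = 1 := by rw [← map_pow]; exact (hker _).mpr hxpW
  -- order of τ divides u, hence τ ^ a = 1
  have hconj : orderOf (τ ^ p) = orderOf τ := by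
    have := orderOf_injective (MulAut.conj σ⁻¹).toMonoidHom (MulEquiv.injective _) τ
    rw [MulEquiv.coe_toMonoidHom, MulAut.conj_apply, inv_inv] at this
    rw [← hστ.1, this]
  have hpd : ¬ p ∣ orderOf τ := by
    intro hd
    have h2 := orderOf_pow (n := p) τ
    rw [hconj, Nat.gcd_comm, Nat.gcd_eq_left hd] at h2
    have hpos : 0 < orderOf τ := orderOf_pos τ
    have := Nat.div_lt_self hpos hp.one_lt
    omega
  have hcop : (orderOf τ).Coprime (p ^ r) :=
    (Nat.coprime_comm.mp ((Nat.Prime.coprime_iff_not_dvd hp).mpr hpd)).pow_right r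
  have hdvdu : orderOf τ ∣ u := by
    refine Nat.Coprime.dvd_of_dvd_mul_right hcop ?_
    rw [← hcard]; exact orderOf_dvd_natCard τ
  have hτa : τ ^ a = 1 := by
    rw [← orderOf_dvd_iff_zpow_eq_one]
    exact dvd_trans (Int.natCast_dvd_natCast.mpr hdvdu) (Int.modEq_zero_iff_dvd.mp ha0)
  -- the exponent sum S is divisible by p
  set S : ℤ := ∑ i ∈ Finset.range (p - 1), h ^ (p - 1 - i) with hSdef
  have hpS : (p : ℤ) ∣ S := by
    rw [← ZMod.intCast_zmod_eq_zero_iff_dvd]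
    push_cast [hSdef]
    have hre : ∑ i ∈ Finset.range (p - 1), (h : ZMod p) ^ (p - 1 - i)
        = ∑ i ∈ Finset.range (p - 1), (h : ZMod p) ^ (i + 1) := by
      rw [← Finset.sum_range_reflect (fun j => (h : ZMod p) ^ (j + 1)) (p - 1)]
      refine Finset.sum_congr rfl fun i hi => ?_
      rw [Finset.mem_range] at hi
      congr 1
      omega
    rw [hre]
    have hgeom : (∑ i ∈ Finset.range (p - 1), (h : ZMod p) ^ i) * ((h : ZMod p) - 1)
        = (h : ZMod p) ^ (p - 1) - 1 := geom_sum_mul _ _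
    have hh1 : (h : ZMod p) ^ (p - 1) = 1 := by
      rw [← hord]; exact pow_orderOf_eq_one _
    have hne : (h : ZMod p) - 1 ≠ 0 := by
      rw [sub_ne_zero]
      intro heq
      rw [heq, orderOf_one] at hord
      omega
    have hgz : (∑ i ∈ Finset.range (p - 1), (h : ZMod p) ^ i) = 0 := by
      rcases mul_eq_zero.mp (by rw [hgeom, hh1, sub_self]) with h' | h'
      · exact h'
      · exact absurd h' hne
    calc ∑ i ∈ Finset.range (p - 1), (h : ZMod p) ^ (i + 1)
        = (h : ZMod p) * ∑ i ∈ Finset.range (p - 1), (h : ZMod p) ^ i := by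
          rw [Finset.mul_sum]; exact Finset.sum_congr rfl fun i _ => by rw [pow_succ']
      _ = 0 := by rw [hgz, mul_zero]
  -- compute the image of the tame bracket
  have hB : π (tameBracket p h a x₀ τ) = 1 := by
    have hmap : π (tameBracket p h a x₀ τ)
        = (((List.range (p - 1)).map fun i => π x₀ ^ ((h : ℤ) ^ (p - 1 - i)) * π τ).prod) ^ a := by
      rw [tameBracket, map_zpow, map_list_prod, List.map_map]
      simp [Function.comp_def]
    rw [hmap, list_prod_pow_commute (π x₀) (π τ) hcomm (fun i => h ^ (p - 1 - i)) (p - 1),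
      ← hSdef]
    have hc2 : Commute (π x₀ ^ S) (π τ ^ (p - 1)) := (hcomm.zpow_left S).pow_right (p - 1)
    rw [hc2.mul_zpow]
    have hx1 : (π x₀ ^ S) ^ a = 1 := by
      obtain ⟨k, hk⟩ := hpS
      rw [← zpow_mul, hk]
      have : (p : ℤ) * k * a = (p : ℤ) * (k * a) := by ring
      rw [this, zpow_mul, zpow_natCast, hxp, one_zpow]
    have hy1 : ((π τ ^ (p - 1)) : G ⧸ W) ^ a = 1 := by
      have : (π τ : G ⧸ W) ^ a = 1 := by rw [← map_zpow, hτa, map_one]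
      rw [← zpow_natCast (π τ) (p - 1), ← zpow_mul, mul_comm, zpow_mul, this, one_zpow]
    rw [hx1, hy1, mul_one]
  -- conclude
  have hσx : π (σ⁻¹ * x₀ * σ) = 1 := by
    have h2 : π (σ⁻¹ * x₀ * σ * (tameBracket p h a x₀ τ)⁻¹) = 1 := (hker _).mpr hyp
    rw [map_mul, map_inv, hB, inv_one, mul_one] at h2
    exact h2
  have hmem : σ⁻¹ * x₀ * σ ∈ W := (hker _).mp hσx
  have := (pFrattini_normal p G).conj_mem _ hmem σ
  simpa [mul_assoc] using this
end

section
/- Let p be an odd prime. Any quotient of a potentially p-realizable finite group is potentially p-realizable: if G admits a tame structure and N is a normal subgroup of G, then G/N admits a tame structure. More precisely, if G ⊇ G₀ ⊇ G₁ is a tame structure on G, then G/N ⊇ G₀N/N ⊇ G₁N/N is a tame structure on G/N. -/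
/-- A tame structure `G ⊇ G₀ ⊇ G₁` on a group `G`. -/
def IsTameStructure (p : ℕ) {G : Type*} [Group G] (G₀ G₁ : Subgroup G) : Prop :=
  G₁ ≤ G₀ ∧ G₀.Normal ∧ G₁.Normal ∧ IsPGroup p G₁ ∧
    Nat.Coprime (G₁.relIndex G₀) p ∧
    ∃ σ τ : G, τ ∈ G₀ ∧ σ⁻¹ * τ * σ = τ ^ p ∧
      Subgroup.closure {σ} ⊔ G₀ = ⊤ ∧
      G₀ ≤ Subgroup.closure {τ} ⊔ G₁

/-- `G` is potentially `p`-realizable if it admits a tame structure. -/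
def IsPotentiallyPRealizable (p : ℕ) (G : Type*) [Group G] : Prop :=
  ∃ G₀ G₁ : Subgroup G, IsTameStructure p G₀ G₁

/-- Any quotient of a potentially `p`-realizable group is potentially `p`-realizable;
more precisely, the images of a tame structure form a tame structure on the quotient. -/
theorem quotient_of_potentially_realizable (p : ℕ) (hp : p.Prime) (hodd : Odd p)
    (G : Type*) [Group G] [Finite G] (G₀ G₁ : Subgroup G)
    (h : IsTameStructure p G₀ G₁) (N : Subgroup G) [N.Normal] :
    IsTameStructure p (G₀.map (QuotientGroup.mk' N)) (G₁.map (QuotientGroup.mk' N)) ∧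
      IsPotentiallyPRealizable p (G ⧸ N) := by
  obtain ⟨h01, h0n, h1n, hpg, hcop, σ, τ, hτ, hrel, hsup, hle⟩ := h
  set f := QuotientGroup.mk' N with hf
  have hsurj : Function.Surjective f := QuotientGroup.mk'_surjective N
  have key : IsTameStructure p (G₀.map f) (G₁.map f) := by
    refine ⟨Subgroup.map_mono h01, h0n.map f hsurj, h1n.map f hsurj, hpg.map f, ?_,
      f σ, f τ, Subgroup.mem_map_of_mem f hτ, ?_, ?_, ?_⟩
    · have h1 : (G₁.map f).relIndex (G₀.map f) = (G₁ ⊔ N).relIndex G₀ := by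
        rw [← Subgroup.relIndex_comap, Subgroup.comap_map_eq,
          QuotientGroup.ker_mk']
      rw [h1]
      exact Nat.Coprime.coprime_dvd_left
        (Subgroup.relIndex_dvd_of_le_left G₀ le_sup_left) hcop
    · rw [← map_inv, ← map_mul, ← map_mul, hrel, map_pow]
    · rw [← Set.image_singleton, ← MonoidHom.map_closure, ← Subgroup.map_sup, hsup]
      exact Subgroup.map_top_of_surjective f hsurj
    · calc G₀.map f ≤ (Subgroup.closure {τ} ⊔ G₁).map f := Subgroup.map_mono hle
        _ = Subgroup.closure {f τ} ⊔ G₁.map f := by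
            rw [Subgroup.map_sup, MonoidHom.map_closure, Set.image_singleton]
  exact ⟨key, _, _, key⟩
end

section
/- Let p be an odd prime, G a finite group with p-core V, and suppose G ⊇ G₀ ⊇ G₁ is a tame structure on G. Then G ⊇ G₀V ⊇ V is also a tame structure on G. -/
open scoped Pointwise

/-- A normal `p`-subgroup is contained in the `p`-core. -/
lemma le_pCore (p : ℕ) (hp : p.Prime) {G : Type*} [Group G] [Finite G]
    {N : Subgroup G} [N.Normal] (hN : IsPGroup p N) : N ≤ pCore p G := by
  haveI := Fact.mk hp
  obtain ⟨Q, hQ⟩ := hN.exists_le_sylow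
  refine le_iInf fun P => ?_
  obtain ⟨g, rfl⟩ := MulAction.exists_smul_eq G Q P
  rw [Sylow.coe_subgroup_smul]
  intro x hx
  rw [Subgroup.mem_pointwise_smul_iff_inv_smul_mem]
  exact hQ (by simpa [MulAut.conj] using Subgroup.Normal.conj_mem ‹N.Normal› x hx g⁻¹)

lemma pCore_isPGroup (p : ℕ) (hp : p.Prime) (G : Type*) [Group G] [Finite G] :
    IsPGroup p (pCore p G) := by
  haveI := Fact.mk hp
  obtain ⟨P⟩ := (inferInstance : Nonempty (Sylow p G))
  exact P.2.to_le (iInf_le _ P)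

/-- If `G ⊇ G₀ ⊇ G₁` is a tame structure on `G`, so is `G ⊇ G₀V ⊇ V`,
where `V` is the `p`-core of `G`. -/
theorem tameStructure_sup_pCore (p : ℕ) (hp : p.Prime) (hodd : Odd p)
    (G : Type*) [Group G] [Finite G] (G₀ G₁ : Subgroup G)
    (h : IsTameStructure p G₀ G₁) :
    IsTameStructure p (G₀ ⊔ pCore p G) (pCore p G) := by
  obtain ⟨h10, hG₀, hG₁, hpgrp, hcop, σ, τ, hτ, hconj, hsup, hle⟩ := h
  have hV : G₁ ≤ pCore p G := le_pCore p hp hpgrp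
  refine ⟨le_sup_right, Subgroup.sup_normal G₀ (pCore p G), inferInstance,
    pCore_isPGroup p hp G, ?_, σ, τ, le_sup_left (a := G₀) hτ, hconj, ?_, ?_⟩
  · rw [Subgroup.relIndex_sup_right]
    exact Nat.Coprime.coprime_dvd_left (Subgroup.relIndex_dvd_of_le_left G₀ hV) hcop
  · rw [← top_le_iff, ← hsup]
    exact sup_le_sup_left le_sup_left _
  · exact sup_le (hle.trans (sup_le_sup_left hV _)) le_sup_right
end

section
/- Let p be an odd prime and G a finite group of order n = u_p·p^r with p ∤ u_p. Let h be an integer with h^{p−1} ≡ 1 (mod p^r) and h ≢ 1 (mod p), and let a be an integer with a ≡ 0 (mod u_p) and (p−1)a ≡ 1 (mod p^r). If x ∈ G has p-power order, τ ∈ G has order coprime to p, and τ commutes with x, then ⟨x,τ⟩ = (x^{h^{p−1}} τ · x^{h^{p−2}} τ ⋯ x^{h} τ)^{a} = 1. -/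
private lemma prod_comm_pow {G : Type*} [Group G] (x y : G) (hc : Commute x y)
    (e : ℕ → ℤ) (n : ℕ) :
    ((List.range n).map fun i => x ^ (e i) * y).prod =
      x ^ (∑ i ∈ Finset.range n, e i) * y ^ n := by
  induction n with
  | zero => simp
  | succ n ih =>
    rw [List.range_succ, List.map_append, List.prod_append, ih, Finset.sum_range_succ]
    simp only [List.map_cons, List.map_nil, List.prod_cons, List.prod_nil, mul_one]
    have h1 : y ^ n * x ^ (e n) = x ^ (e n) * y ^ n :=
      ((hc.symm.zpow_right (e n)).pow_left n).eq
    rw [zpow_add, pow_succ, ← mul_assoc, mul_assoc (x ^ _) (y ^ n), h1]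
    group

/-- If `x` has `p`-power order, `τ` has order coprime to `p`, and `x` and `τ` commute,
then `⟨x, τ⟩ = 1`. -/
theorem tameBracket_eq_one (p : ℕ) [Fact p.Prime] (hodd : Odd p)
    (G : Type*) [Group G] [Finite G] (u r : ℕ)
    (hcard : Nat.card G = u * p ^ r) (hu : ¬ p ∣ u)
    (h a : ℤ)
    (hh1 : h ^ (p - 1) ≡ 1 [ZMOD ((p : ℤ) ^ r)])
    (hh2 : ¬ h ≡ 1 [ZMOD (p : ℤ)])
    (ha0 : a ≡ 0 [ZMOD (u : ℤ)])
    (ha1 : ((p : ℤ) - 1) * a ≡ 1 [ZMOD ((p : ℤ) ^ r)])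
    (x τ : G) (hx : ∃ k : ℕ, orderOf x = p ^ k)
    (hτ : Nat.Coprime (orderOf τ) p) (hcomm : Commute x τ) :
    tameBracket p h a x τ = 1 := by
  obtain ⟨k, hk⟩ := hx
  have hp := (Fact.out : p.Prime)
  set S : ℤ := ∑ i ∈ Finset.range (p - 1), h ^ (p - 1 - i) with hS
  -- p^r ∣ S
  have hgeom : (h - 1) * S = h * (h ^ (p - 1) - 1) := by
    have : S = ∑ i ∈ Finset.range (p - 1), h ^ (i + 1) := by
      rw [hS, ← Finset.sum_range_reflect]
      apply Finset.sum_congr rfl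
      intro i hi
      simp only [Finset.mem_range] at hi
      congr 1
      omega
    rw [this, Finset.mul_sum, mul_sub, mul_one]
    calc ∑ i ∈ Finset.range (p-1), (h - 1) * h ^ (i + 1)
        = h * ((∑ i ∈ Finset.range (p-1), h ^ i) * (h - 1)) := by
          rw [Finset.sum_mul, Finset.mul_sum]
          apply Finset.sum_congr rfl
          intro i _
          ring
      _ = h * (h ^ (p-1) - 1) := by rw [geom_sum_mul]
      _ = h * h ^ (p-1) - h := by ring
  have hdvd1 : ((p : ℤ) ^ r) ∣ h ^ (p - 1) - 1 := (Int.modEq_iff_dvd.mp hh1.symm)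
  have hnd : ¬ (p : ℤ) ∣ h - 1 := by
    intro hd
    apply hh2
    have : (p : ℤ) ∣ 1 - h := by
      have := (dvd_neg).mpr hd
      simpa [neg_sub] using this
    exact Int.modEq_iff_dvd.mpr this
  have hcop : IsCoprime ((p : ℤ) ^ r) (h - 1) :=
    (((Nat.prime_iff_prime_int.mp hp).coprime_iff_not_dvd.mpr hnd).pow_left)
  have hScop : ((p : ℤ) ^ r) ∣ S := by
    have hdm : ((p : ℤ) ^ r) ∣ (h - 1) * S := hgeom ▸ Dvd.dvd.mul_left hdvd1 h
    exact hcop.dvd_of_dvd_mul_left hdm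
  -- order facts
  have hordx : (p : ℕ) ^ k ∣ p ^ r := by
    have h1 : orderOf x ∣ u * p ^ r := hcard ▸ orderOf_dvd_natCard x
    rw [hk] at h1
    have hcopk : Nat.Coprime (p ^ k) u :=
      (Nat.Prime.coprime_iff_not_dvd hp).mpr hu |>.pow_left k
    exact (Nat.Coprime.dvd_of_dvd_mul_left hcopk h1)
  have hxS : x ^ S = 1 := by
    rw [← orderOf_dvd_iff_zpow_eq_one, hk]
    exact dvd_trans (Int.natCast_dvd_natCast.mpr hordx) (by exact_mod_cast hScop)
  have hordτ : orderOf τ ∣ u := by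
    have h1 : orderOf τ ∣ u * p ^ r := hcard ▸ orderOf_dvd_natCard τ
    exact Nat.Coprime.dvd_of_dvd_mul_right (hτ.pow_right r) h1
  have hua : (u : ℤ) ∣ a := (Int.modEq_zero_iff_dvd).mp ha0
  have hτa : τ ^ a = 1 := by
    rw [← orderOf_dvd_iff_zpow_eq_one]
    exact dvd_trans (Int.natCast_dvd_natCast.mpr hordτ) hua
  -- compute
  unfold tameBracket
  rw [prod_comm_pow x τ hcomm, ← hS]
  have hc2 : Commute (x ^ S) (τ ^ (p - 1)) := (hcomm.zpow_left S).pow_right (p - 1)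
  rw [hc2.mul_zpow, hxS, one_zpow, one_mul, ← zpow_natCast τ (p - 1), ← zpow_mul,
    mul_comm, zpow_mul, hτa, one_zpow]
end
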